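/- Fix Δ > 0, set β* = 2/(2 + Δ²) and C* = exp(Δ²/2). Then the ratio N(Δ,1)({x : x ≥ t}) / (C* · (N(0,1)({x : x ≥ t}))^{β*}) tends to 0 as t → ∞, where N(μ,1) denotes the Gaussian measure on ℝ with mean μ and variance 1. That is, the Neyman–Pearson true positive rate decays strictly faster than the Hölder ceiling C_{α*}·δ^{β*} as the false acceptance rate δ → 0. -/

import Mathlib

open MeasureTheory ProbabilityTheory
open scoped ENNReal NNReal

namespace NPHolderAux

open Real Filter Set

lemma pdf_one (μ x : ℝ) :
    gaussianPDFReal μ 1 x = (Real.sqrt (2 * Real.pi))⁻¹ * Real.exp (-(x - μ) ^ 2 / 2) := by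
  simp [gaussianPDFReal]

lemma tail_toReal (μ t : ℝ) :
    ((gaussianReal μ 1) {x : ℝ | t ≤ x}).toReal = ∫ x in Set.Ici t, gaussianPDFReal μ 1 x := by
  rw [show {x : ℝ | t ≤ x} = Set.Ici t from rfl,
    gaussianReal_apply_eq_integral μ one_ne_zero,
    ENNReal.toReal_ofReal (setIntegral_nonneg measurableSet_Ici
      (fun x _ => gaussianPDFReal_nonneg μ 1 x))]

lemma tail_ub (μ t : ℝ) (h : μ + 1 ≤ t) :
    ((gaussianReal μ 1) {x : ℝ | t ≤ x}).toReal ≤ Real.exp (-(t - μ) ^ 2 / 2) := by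
  have hsqrt : 0 < Real.sqrt (2 * Real.pi) := Real.sqrt_pos.mpr (by positivity)
  set K : ℝ := (Real.sqrt (2 * Real.pi))⁻¹ * Real.exp (-(t - μ) ^ 2 / 2) * Real.exp t with hK
  have hKnn : 0 ≤ K := by positivity
  rw [tail_toReal, integral_Ici_eq_integral_Ioi]
  have hint : IntegrableOn (fun x => K * Real.exp (-1 * x)) (Set.Ioi t) :=
    (exp_neg_integrableOn_Ioi t one_pos).const_mul K
  calc ∫ x in Set.Ioi t, gaussianPDFReal μ 1 x
      ≤ ∫ x in Set.Ioi t, K * Real.exp (-1 * x) := by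
        refine setIntegral_mono_on ((integrable_gaussianPDFReal μ 1).integrableOn)
          hint measurableSet_Ioi (fun x hx => ?_)
        rw [pdf_one, hK, mul_assoc, mul_assoc, ← Real.exp_add, ← Real.exp_add]
        refine mul_le_mul_of_nonneg_left (Real.exp_le_exp.mpr ?_) (by positivity)
        have hx' : t < x := hx
        nlinarith [sq_nonneg (x - t)]
    _ = K * Real.exp (-t) := by
        rw [integral_const_mul]
        congr 1
        rw [show (fun x : ℝ => Real.exp (-1 * x)) = fun x : ℝ => Real.exp (-x) by
          funext x; rw [neg_one_mul]]
        exact integral_exp_neg_Ioi t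
    _ = (Real.sqrt (2 * Real.pi))⁻¹ * Real.exp (-(t - μ) ^ 2 / 2) := by
        rw [hK, mul_assoc, ← Real.exp_add, add_neg_cancel, Real.exp_zero, mul_one]
    _ ≤ 1 * Real.exp (-(t - μ) ^ 2 / 2) := by
        refine mul_le_mul_of_nonneg_right ?_ (Real.exp_nonneg _)
        rw [inv_le_one_iff₀]
        right
        have h2 : (2 : ℝ) ≤ 2 * Real.pi := by nlinarith [Real.pi_gt_three]
        calc (1 : ℝ) = Real.sqrt 1 := (Real.sqrt_one).symm
          _ ≤ Real.sqrt (2 * Real.pi) := Real.sqrt_le_sqrt (by linarith)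
    _ = Real.exp (-(t - μ) ^ 2 / 2) := one_mul _

lemma tail_lb (t : ℝ) (ht : 0 ≤ t) :
    (Real.sqrt (2 * Real.pi))⁻¹ * Real.exp (-(t + 1) ^ 2 / 2) ≤
      ((gaussianReal 0 1) {x : ℝ | t ≤ x}).toReal := by
  rw [tail_toReal]
  have h1 : ∫ x in Set.Icc t (t + 1),
      (Real.sqrt (2 * Real.pi))⁻¹ * Real.exp (-(t + 1) ^ 2 / 2) ≤
      ∫ x in Set.Icc t (t + 1), gaussianPDFReal 0 1 x := by
    refine setIntegral_mono_on (integrableOn_const (by simp))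
      ((integrable_gaussianPDFReal 0 1).integrableOn) measurableSet_Icc (fun x hx => ?_)
    rw [pdf_one]
    refine mul_le_mul_of_nonneg_left (Real.exp_le_exp.mpr ?_) (by positivity)
    have hx1 := hx.1
    have hx2 := hx.2
    nlinarith
  have h2 : ∫ x in Set.Icc t (t + 1),
      ((Real.sqrt (2 * Real.pi))⁻¹ * Real.exp (-(t + 1) ^ 2 / 2)) =
      (Real.sqrt (2 * Real.pi))⁻¹ * Real.exp (-(t + 1) ^ 2 / 2) := by
    rw [setIntegral_const]
    simp [Real.volume_Icc]
  have h3 : ∫ x in Set.Icc t (t + 1), gaussianPDFReal 0 1 x ≤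
      ∫ x in Set.Ici t, gaussianPDFReal 0 1 x := by
    refine setIntegral_mono_set ((integrable_gaussianPDFReal 0 1).integrableOn)
      (Filter.Eventually.of_forall (fun x => gaussianPDFReal_nonneg 0 1 x))
      (Filter.Eventually.of_forall (fun x hx => hx.1))
  linarith [h1, h3, h2.symm.le]

lemma quad_atBot {a b c : ℝ} (ha : a < 0) :
    Tendsto (fun t : ℝ => a * t ^ 2 + b * t + c) atTop atBot := by
  have h1 : Tendsto (fun t : ℝ => a * t + b) atTop atBot :=
    tendsto_atBot_add_const_right _ b (tendsto_id.const_mul_atTop_of_neg ha)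
  have h2 : Tendsto (fun t : ℝ => t * (a * t + b)) atTop atBot :=
    Filter.Tendsto.atTop_mul_atBot₀ tendsto_id h1
  have h3 := tendsto_atBot_add_const_right atTop c h2
  refine h3.congr (fun t => by ring)

end NPHolderAux

/-- The Neyman–Pearson TPR decays strictly faster than the Hölder ceiling:
with `β* = 2/(2+Δ²)` and `C* = exp(Δ²/2)`, the ratio
`N(Δ,1)([t,∞)) / (C* · N(0,1)([t,∞))^{β*})` tends to `0` as `t → ∞`. -/
theorem np_faster_than_holder_ceiling (Δ : ℝ) (hΔ : 0 < Δ) :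
    Filter.Tendsto
      (fun t : ℝ =>
        ((gaussianReal Δ 1) {x : ℝ | t ≤ x}).toReal /
          (Real.exp (Δ ^ 2 / 2) *
            ((gaussianReal 0 1) {x : ℝ | t ≤ x}).toReal ^ (2 / (2 + Δ ^ 2))))
      Filter.atTop (nhds 0) := by
  open Real Filter Set NPHolderAux in
  have hβpos : 0 < 2 / (2 + Δ ^ 2) := by positivity
  have hβlt : 2 / (2 + Δ ^ 2) < 1 := by
    rw [div_lt_one (by positivity)]; nlinarith
  have hc : 0 < (Real.sqrt (2 * Real.pi))⁻¹ := by positivity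
  set c : ℝ := (Real.sqrt (2 * Real.pi))⁻¹ with hcdef
  -- the explicit majorant
  have hgE : ∀ t : ℝ,
      Real.exp (-(t - Δ) ^ 2 / 2) /
        (Real.exp (Δ ^ 2 / 2) * (c * Real.exp (-(t + 1) ^ 2 / 2)) ^ (2 / (2 + Δ ^ 2)))
      = (Real.exp (Δ ^ 2 / 2))⁻¹ *
        Real.exp ((-1 / 2 + (2 / (2 + Δ ^ 2)) / 2) * t ^ 2 + (Δ + 2 / (2 + Δ ^ 2)) * t +
          (-Δ ^ 2 / 2 + (2 / (2 + Δ ^ 2)) / 2 - (2 / (2 + Δ ^ 2)) * Real.log c)) := by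
    intro t
    have hpos : (0 : ℝ) < c * Real.exp (-(t + 1) ^ 2 / 2) := by positivity
    rw [Real.rpow_def_of_pos hpos, Real.log_mul (ne_of_gt hc) (Real.exp_ne_zero _),
      Real.log_exp, ← Real.exp_add, div_eq_mul_inv, ← Real.exp_neg, ← Real.exp_add,
      ← Real.exp_neg, ← Real.exp_add]
    congr 1
    ring
  have hgto : Filter.Tendsto
      (fun t : ℝ => Real.exp (-(t - Δ) ^ 2 / 2) /
        (Real.exp (Δ ^ 2 / 2) * (c * Real.exp (-(t + 1) ^ 2 / 2)) ^ (2 / (2 + Δ ^ 2))))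
      Filter.atTop (nhds 0) := by
    have hE : Filter.Tendsto
        (fun t : ℝ => (-1 / 2 + (2 / (2 + Δ ^ 2)) / 2) * t ^ 2 + (Δ + 2 / (2 + Δ ^ 2)) * t +
          (-Δ ^ 2 / 2 + (2 / (2 + Δ ^ 2)) / 2 - (2 / (2 + Δ ^ 2)) * Real.log c))
        Filter.atTop Filter.atBot := quad_atBot (by linarith)
    have h := (Real.tendsto_exp_atBot.comp hE).const_mul (Real.exp (Δ ^ 2 / 2))⁻¹
    rw [mul_zero] at h
    exact Filter.Tendsto.congr (fun t => (hgE t).symm) h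
  refine squeeze_zero' ?_ ?_ hgto
  · filter_upwards with t
    exact div_nonneg ENNReal.toReal_nonneg (by positivity)
  · filter_upwards [Filter.eventually_ge_atTop (Δ + 1)] with t ht
    have ht0 : (0 : ℝ) ≤ t := by linarith
    have hub := tail_ub Δ t ht
    have hlb := tail_lb t ht0
    have hlbpos : (0 : ℝ) < c * Real.exp (-(t + 1) ^ 2 / 2) := by positivity
    refine div_le_div₀ (Real.exp_nonneg _) hub (by positivity) ?_
    refine mul_le_mul_of_nonneg_left ?_ (Real.exp_nonneg _)
    exact Real.rpow_le_rpow hlbpos.le hlb hβpos.le
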